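/- For every integer k ≥ 0, the subgraph C_k of complete lines of the Sierpiński graph Γ_k satisfies cut^{1/2}(C_k) ≥ 2^k/160. -/

import Mathlib

open scoped Classical

/-- Reachability within the subgraph of `X` induced on a vertex set `s`. -/
def SimpleGraph.ReachIn {V : Type*} (X : SimpleGraph V) (s : Set V) (v w : V) : Prop :=
  ∃ (hv : v ∈ s) (hw : w ∈ s), (X.induce s).Reachable ⟨v, hv⟩ ⟨w, hw⟩

/-- The vertex set of the connected component of `v` in the subgraph of `X` induced on `s`
(empty if `v ∉ s`). -/
def SimpleGraph.compIn {V : Type*} (X : SimpleGraph V) (s : Set V) (v : V) : Set V :=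
  {w | X.ReachIn s v w}

/-- `T` is a vertex set witnessing `cut¹ᐟ²` for the subgraph of `X` induced on the finite
vertex set `G`: after removing `T` from `G`, every connected component has at most
`|G|/2` vertices. -/
def IsHalfCutSet {V : Type*} (X : SimpleGraph V) (G T : Finset V) : Prop :=
  T ⊆ G ∧ ∀ v : V, 2 * (X.compIn (↑(G \ T)) v).ncard ≤ G.card

/-- `cut¹ᐟ²` of the subgraph of `X` induced on the finite vertex set `G`: the least size of
a vertex set whose removal leaves all connected components of size at most `|G|/2`. -/
noncomputable def cutHalf {V : Type*} (X : SimpleGraph V) (G : Finset V) : ℕ :=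
  sInf {t | ∃ T : Finset V, IsHalfCutSet X G T ∧ T.card = t}

/-- The `1/2`-separation profile of `X`, over finite subgraphs with vertex set inside `W`. -/
noncomputable def sepHalf {V : Type*} (X : SimpleGraph V) (W : Set V) (n : ℕ) : ℕ :=
  sSup {c | ∃ G : Finset V, ↑G ⊆ W ∧ G.card ≤ n ∧ c = cutHalf X G}

/-- The `i`-th digit of `x` in base `b`. -/
def digit (b i x : ℕ) : ℕ := x / b ^ i % b

/-- Membership in the vertex set of the infinite Sierpinski graph: no position at which
both coordinates have base-3 digit `1`. -/
def SierpMem (p : ℕ × ℕ) : Prop :=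
  ∀ i : ℕ, ¬(digit 3 i p.1 = 1 ∧ digit 3 i p.2 = 1)

/-- The infinite Sierpinski graph `S`, with edges between valid points at `ℓ¹`-distance 1. -/
def SierpGraph : SimpleGraph (ℕ × ℕ) where
  Adj p q := SierpMem p ∧ SierpMem q ∧ |(p.1 : ℤ) - q.1| + |(p.2 : ℤ) - q.2| = 1
  symm := by
    constructor
    rintro p q ⟨hp, hq, h⟩
    exact ⟨hq, hp, by
      rw [abs_sub_comm (q.1 : ℤ) (p.1 : ℤ), abs_sub_comm (q.2 : ℤ) (p.2 : ℤ)]; exact h⟩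
  loopless := by constructor; rintro p ⟨-, -, h⟩; simp at h

/-- The vertex set of the sphere `Γ_k`. -/
noncomputable def GammaV (k : ℕ) : Finset (ℕ × ℕ) :=
  (Finset.range (3 ^ k) ×ˢ Finset.range (3 ^ k)).filter SierpMem

/-- The intersection of the vertical line `V_x` with `Γ_k`. -/
def VlineSet (k x : ℕ) : Set (ℕ × ℕ) := {p | p ∈ GammaV k ∧ p.1 = x}

/-- The intersection of the horizontal line `H_y` with `Γ_k`. -/
def HlineSet (k y : ℕ) : Set (ℕ × ℕ) := {p | p ∈ GammaV k ∧ p.2 = y}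

/-- The vertical line `V_x` is complete in `Γ_k`: its intersection with `Γ_k` is connected. -/
def CompleteV (k x : ℕ) : Prop := (SierpGraph.induce (VlineSet k x)).Connected

/-- The horizontal line `H_y` is complete in `Γ_k`: its intersection with `Γ_k` is connected. -/
def CompleteH (k y : ℕ) : Prop := (SierpGraph.induce (HlineSet k y)).Connected

/-- The vertex set of the complete-lines subgraph `C_k` of `Γ_k`. -/
noncomputable def CkV (k : ℕ) : Finset (ℕ × ℕ) :=
  (GammaV k).filter fun p => CompleteV k p.1 ∨ CompleteH k p.2



lemma digit_succ (i y : ℕ) : digit 3 (i+1) y = digit 3 i (y/3) := by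
  unfold digit
  rw [Nat.div_div_eq_div_mul, ← pow_succ']

lemma digit_zero_val (y : ℕ) : digit 3 0 y = y % 3 := by simp [digit]

lemma digit_zero (i : ℕ) : digit 3 i 0 = 0 := by simp [digit]

lemma digit_of_lt {i k y : ℕ} (h : y < 3^k) (hik : k ≤ i) : digit 3 i y = 0 := by
  unfold digit
  rw [Nat.div_eq_of_lt (lt_of_lt_of_le h (Nat.pow_le_pow_right (by norm_num) hik))]

lemma digit_pow (i : ℕ) : digit 3 i (3^i) = 1 := by
  unfold digit
  rw [Nat.div_self (pow_pos (by norm_num : (0:ℕ) < 3) i)]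

noncomputable def Dset (k : ℕ) : Finset ℕ :=
  (Finset.range (3^k)).filter fun y => ∀ i, digit 3 i y ≠ 1

lemma mem_Dset {k y : ℕ} : y ∈ Dset k ↔ y < 3^k ∧ ∀ i, digit 3 i y ≠ 1 := by
  simp [Dset]

lemma Dset_succ (k : ℕ) :
    Dset (k+1) = ((Dset k) ×ˢ ({0,2} : Finset ℕ)).image (fun p => 3*p.1 + p.2) := by
  ext y
  simp only [Finset.mem_image, Finset.mem_product, Finset.mem_insert, Finset.mem_singleton,
    mem_Dset]
  constructor
  · rintro ⟨hy, hd⟩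
    refine ⟨(y/3, y%3), ⟨⟨?_, ?_⟩, ?_⟩, ?_⟩
    · have h3 : (3:ℕ)^(k+1) = 3^k * 3 := pow_succ 3 k
      exact (Nat.div_lt_iff_lt_mul (by norm_num)).2 (by omega)
    · intro i
      rw [← digit_succ]; exact hd (i+1)
    · have := hd 0
      rw [digit_zero_val] at this
      have := Nat.mod_lt y (show 0 < 3 by norm_num)
      omega
    · simp; omega
  · rintro ⟨⟨q, r⟩, ⟨⟨hq, hd⟩, hr⟩, rfl⟩
    simp only at *
    constructor
    · have h3 : (3:ℕ)^(k+1) = 3^k * 3 := pow_succ 3 k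
      omega
    · intro i
      cases i with
      | zero => rw [digit_zero_val]; omega
      | succ i =>
        rw [digit_succ]
        have : (3*q + r)/3 = q := by omega
        rw [this]; exact hd i

lemma card_Dset (k : ℕ) : (Dset k).card = 2^k := by
  induction k with
  | zero =>
    have : Dset 0 = {0} := by
      ext y
      simp only [mem_Dset, Finset.mem_singleton, pow_zero]
      constructor
      · rintro ⟨h, -⟩; omega
      · rintro rfl; exact ⟨by norm_num, fun i => by rw [digit_zero]; omega⟩
    simp [this]
  | succ k ih =>
    rw [Dset_succ, Finset.card_image_of_injOn, Finset.card_product]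
    · simp [ih]; ring
    · rintro ⟨a,b⟩ hab ⟨c,d⟩ hcd h
      simp only [Finset.mem_coe, Finset.mem_product, Finset.mem_insert, Finset.mem_singleton] at hab hcd
      obtain ⟨-, hb⟩ := hab
      obtain ⟨-, hd⟩ := hcd
      dsimp only at h
      have : a = c ∧ b = d := by omega
      simp [Prod.ext_iff, this.1, this.2]

lemma pred_pow_mem_Dset (k : ℕ) : (3^k - 1) ∈ Dset k := by
  induction k with
  | zero => simp [mem_Dset, digit_zero]
  | succ k ih =>
    rw [Dset_succ]
    refine Finset.mem_image.2 ⟨(3^k - 1, 2), ?_, ?_⟩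
    · simp [ih]
    · have h1 : (1:ℕ) ≤ 3^k := Nat.one_le_pow _ _ (by norm_num)
      have h3 : (3:ℕ)^(k+1) = 3^k * 3 := pow_succ 3 k
      simp only; omega

-- Stage 2: line characterization

lemma sierp_of_right {x y : ℕ} (hy : ∀ i, digit 3 i y ≠ 1) : SierpMem (x, y) :=
  fun i h => hy i h.2

lemma sierp_of_left {x y : ℕ} (hx : ∀ i, digit 3 i x ≠ 1) : SierpMem (x, y) :=
  fun i h => hx i h.1

lemma mem_GammaV {k : ℕ} {p : ℕ × ℕ} :
    p ∈ GammaV k ↔ p.1 < 3^k ∧ p.2 < 3^k ∧ SierpMem p := by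
  simp [GammaV, Finset.mem_filter, Finset.mem_product, and_assoc]

lemma mem_HlineSet {k y : ℕ} {p : ℕ × ℕ} :
    p ∈ HlineSet k y ↔ p.1 < 3^k ∧ p.2 < 3^k ∧ SierpMem p ∧ p.2 = y := by
  unfold HlineSet
  rw [Set.mem_setOf_eq, mem_GammaV]
  tauto

lemma mem_VlineSet {k x : ℕ} {p : ℕ × ℕ} :
    p ∈ VlineSet k x ↔ p.1 < 3^k ∧ p.2 < 3^k ∧ SierpMem p ∧ p.1 = x := by
  unfold VlineSet
  rw [Set.mem_setOf_eq, mem_GammaV]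
  tauto

lemma sierp_adj_cases {p q : ℕ × ℕ} (h : SierpGraph.Adj p q) :
    (p.2 = q.2 ∧ (p.1 = q.1 + 1 ∨ q.1 = p.1 + 1)) ∨
    (p.1 = q.1 ∧ (p.2 = q.2 + 1 ∨ q.2 = p.2 + 1)) := by
  obtain ⟨-, -, habs⟩ := h
  rcases abs_cases ((p.1 : ℤ) - q.1) with ⟨e1, _⟩ | ⟨e1, _⟩ <;>
    rcases abs_cases ((p.2 : ℤ) - q.2) with ⟨e2, _⟩ | ⟨e2, _⟩ <;>
    rw [e1, e2] at habs <;> omega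

lemma hline_invariant {k y i : ℕ} (hi : digit 3 i y = 1) :
    ∀ {u v : (HlineSet k y)}, (SierpGraph.induce (HlineSet k y)).Walk u v →
      u.val.1 < 3^i → v.val.1 < 3^i := by
  intro u v w
  induction w with
  | nil => exact id
  | @cons a b c hadj _ ih =>
    intro ha
    refine ih ?_
    have hadj' : SierpGraph.Adj a.val b.val := hadj
    have hb2 : b.val.2 = y := (mem_HlineSet.1 b.2).2.2.2
    have ha2 : a.val.2 = y := (mem_HlineSet.1 a.2).2.2.2
    have hbmem : SierpMem b.val := (mem_HlineSet.1 b.2).2.2.1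
    have hbne : b.val.1 ≠ 3^i := by
      intro he
      exact hbmem i ⟨by rw [he]; exact digit_pow i, by rw [hb2]; exact hi⟩
    rcases sierp_adj_cases hadj' with ⟨-, h1⟩ | ⟨h1, h2⟩
    · omega
    · omega

lemma vline_invariant {k x i : ℕ} (hi : digit 3 i x = 1) :
    ∀ {u v : (VlineSet k x)}, (SierpGraph.induce (VlineSet k x)).Walk u v →
      u.val.2 < 3^i → v.val.2 < 3^i := by
  intro u v w
  induction w with
  | nil => exact id
  | @cons a b c hadj _ ih =>
    intro ha
    refine ih ?_
    have hadj' : SierpGraph.Adj a.val b.val := hadj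
    have hb2 : b.val.1 = x := (mem_VlineSet.1 b.2).2.2.2
    have ha2 : a.val.1 = x := (mem_VlineSet.1 a.2).2.2.2
    have hbmem : SierpMem b.val := (mem_VlineSet.1 b.2).2.2.1
    have hbne : b.val.2 ≠ 3^i := by
      intro he
      exact hbmem i ⟨by rw [hb2]; exact hi, by rw [he]; exact digit_pow i⟩
    rcases sierp_adj_cases hadj' with ⟨h1, h2⟩ | ⟨-, h1⟩
    · omega
    · omega

lemma completeH_iff {k y : ℕ} : CompleteH k y ↔ y ∈ Dset k := by
  constructor
  · intro hc
    obtain ⟨p⟩ := hc.nonempty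
    have hy : y < 3^k := by
      have := mem_HlineSet.1 p.2
      omega
    rw [mem_Dset]
    refine ⟨hy, fun i hi => ?_⟩
    have hik : i < k := by
      by_contra hik
      rw [digit_of_lt hy (le_of_not_gt hik)] at hi
      omega
    have h1 : (1:ℕ) ≤ 3^k := Nat.one_le_pow _ _ (by norm_num)
    have ha : ((0 : ℕ), y) ∈ HlineSet k y := by
      rw [mem_HlineSet]
      exact ⟨by positivity, hy, fun j h => by rw [digit_zero] at h; omega, rfl⟩
    have hb : ((3^k - 1 : ℕ), y) ∈ HlineSet k y := by
      rw [mem_HlineSet]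
      have := (mem_Dset.1 (pred_pow_mem_Dset k)).2
      exact ⟨by omega, hy, sierp_of_left this, rfl⟩
    obtain ⟨w⟩ := hc.preconnected ⟨_, ha⟩ ⟨_, hb⟩
    have := hline_invariant hi w (by simpa using pow_pos (by norm_num : (0:ℕ) < 3) i)
    simp only at this
    have h3 : 3^i < 3^k := Nat.pow_lt_pow_right (by norm_num) hik
    omega
  · intro hy
    obtain ⟨hylt, hyd⟩ := mem_Dset.1 hy
    have hmem : ∀ x, x < 3^k → ((x, y) : ℕ × ℕ) ∈ HlineSet k y := fun x hx =>
      mem_HlineSet.2 ⟨hx, hylt, sierp_of_right hyd, rfl⟩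
    have h0 : ((0:ℕ), y) ∈ HlineSet k y := hmem 0 (pow_pos (by norm_num : (0:ℕ) < 3) k)
    have key : ∀ x (hx : x < 3^k),
        (SierpGraph.induce (HlineSet k y)).Reachable ⟨(0, y), h0⟩ ⟨(x, y), hmem x hx⟩ := by
      intro x
      induction x with
      | zero => intro _; exact SimpleGraph.Reachable.refl _
      | succ x ih =>
        intro hx
        have hx' : x < 3^k := by omega
        refine (ih hx').trans (SimpleGraph.Adj.reachable ?_)
        show SierpGraph.Adj (x, y) (x+1, y)
        refine ⟨sierp_of_right hyd, sierp_of_right hyd, ?_⟩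
        simp only
        push_cast
        rw [show ((x:ℤ)) - (x+1) = -1 by ring, sub_self]
        norm_num
    refine (SimpleGraph.connected_iff _).mpr ⟨?_, ⟨⟨_, h0⟩⟩⟩
    · intro u v
      obtain ⟨⟨a, b⟩, hu⟩ := u
      obtain ⟨⟨c, d⟩, hv⟩ := v
      have hb : b = y := (mem_HlineSet.1 hu).2.2.2
      have hd : d = y := (mem_HlineSet.1 hv).2.2.2
      subst hb hd
      have h1 : a < 3^k := (mem_HlineSet.1 hu).1
      have h2 : c < 3^k := (mem_HlineSet.1 hv).1
      exact (key a h1).symm.trans (key c h2)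

lemma completeV_iff {k x : ℕ} : CompleteV k x ↔ x ∈ Dset k := by
  constructor
  · intro hc
    obtain ⟨p⟩ := hc.nonempty
    have hy : x < 3^k := by
      have := mem_VlineSet.1 p.2
      omega
    rw [mem_Dset]
    refine ⟨hy, fun i hi => ?_⟩
    have hik : i < k := by
      by_contra hik
      rw [digit_of_lt hy (le_of_not_gt hik)] at hi
      omega
    have h1 : (1:ℕ) ≤ 3^k := Nat.one_le_pow _ _ (by norm_num)
    have ha : ((x : ℕ), (0:ℕ)) ∈ VlineSet k x := by
      rw [mem_VlineSet]
      exact ⟨hy, by positivity, fun j h => by rw [digit_zero] at h; omega, rfl⟩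
    have hb : ((x : ℕ), (3^k - 1 : ℕ)) ∈ VlineSet k x := by
      rw [mem_VlineSet]
      have := (mem_Dset.1 (pred_pow_mem_Dset k)).2
      exact ⟨hy, by omega, sierp_of_right this, rfl⟩
    obtain ⟨w⟩ := hc.preconnected ⟨_, ha⟩ ⟨_, hb⟩
    have := vline_invariant hi w (by simpa using pow_pos (by norm_num : (0:ℕ) < 3) i)
    simp only at this
    have h3 : 3^i < 3^k := Nat.pow_lt_pow_right (by norm_num) hik
    omega
  · intro hy
    obtain ⟨hylt, hyd⟩ := mem_Dset.1 hy
    have hmem : ∀ z, z < 3^k → ((x, z) : ℕ × ℕ) ∈ VlineSet k x := fun z hz =>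
      mem_VlineSet.2 ⟨hylt, hz, sierp_of_left hyd, rfl⟩
    have h0 : ((x:ℕ), (0:ℕ)) ∈ VlineSet k x := hmem 0 (pow_pos (by norm_num : (0:ℕ) < 3) k)
    have key : ∀ z (hz : z < 3^k),
        (SierpGraph.induce (VlineSet k x)).Reachable ⟨(x, 0), h0⟩ ⟨(x, z), hmem z hz⟩ := by
      intro z
      induction z with
      | zero => intro _; exact SimpleGraph.Reachable.refl _
      | succ z ih =>
        intro hz
        have hz' : z < 3^k := by omega
        refine (ih hz').trans (SimpleGraph.Adj.reachable ?_)
        show SierpGraph.Adj (x, z) (x, z+1)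
        refine ⟨sierp_of_left hyd, sierp_of_left hyd, ?_⟩
        simp only
        push_cast
        rw [show ((z:ℤ)) - (z+1) = -1 by ring, sub_self]
        norm_num
    refine (SimpleGraph.connected_iff _).mpr ⟨?_, ⟨⟨_, h0⟩⟩⟩
    · intro u v
      obtain ⟨⟨a, b⟩, hu⟩ := u
      obtain ⟨⟨c, d⟩, hv⟩ := v
      have hb : a = x := (mem_VlineSet.1 hu).2.2.2
      have hd : c = x := (mem_VlineSet.1 hv).2.2.2
      subst hb hd
      have h1 : b < 3^k := (mem_VlineSet.1 hu).2.1
      have h2 : d < 3^k := (mem_VlineSet.1 hv).2.1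
      exact (key b h1).symm.trans (key d h2)

-- Stage 3

lemma ckV_eq (k : ℕ) :
    CkV k = (Finset.range (3^k) ×ˢ Dset k) ∪ (Dset k ×ˢ Finset.range (3^k)) := by
  ext ⟨x, y⟩
  simp only [CkV, Finset.mem_filter, Finset.mem_union, Finset.mem_product, Finset.mem_range,
    mem_GammaV]
  constructor
  · rintro ⟨⟨hx, hy, -⟩, hc | hc⟩
    · exact Or.inr ⟨completeV_iff.1 hc, hy⟩
    · exact Or.inl ⟨hx, completeH_iff.1 hc⟩
  · rintro (⟨hx, hy⟩ | ⟨hx, hy⟩)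
    · exact ⟨⟨hx, (mem_Dset.1 hy).1, sierp_of_right (mem_Dset.1 hy).2⟩,
        Or.inr (completeH_iff.2 hy)⟩
    · exact ⟨⟨(mem_Dset.1 hx).1, hy, sierp_of_left (mem_Dset.1 hx).2⟩,
        Or.inl (completeV_iff.2 hx)⟩

lemma reachIn_trans {s : Set (ℕ × ℕ)} {a b c : ℕ × ℕ}
    (h1 : SierpGraph.ReachIn s a b) (h2 : SierpGraph.ReachIn s b c) :
    SierpGraph.ReachIn s a c := by
  obtain ⟨ha, hb, r1⟩ := h1
  obtain ⟨hb', hc, r2⟩ := h2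
  exact ⟨ha, hc, r1.trans r2⟩

lemma reach_horiz {s : Set (ℕ × ℕ)} {k y : ℕ} (hy : ∀ i, digit 3 i y ≠ 1)
    (hl : ∀ x, x < 3^k → ((x, y) : ℕ × ℕ) ∈ s) {a b : ℕ}
    (ha : a < 3^k) (hb : b < 3^k) : SierpGraph.ReachIn s (a, y) (b, y) := by
  have h0 : ((0:ℕ), y) ∈ s := hl 0 (pow_pos (by norm_num : (0:ℕ) < 3) k)
  suffices H : ∀ c (hc : c < 3^k),
      (SierpGraph.induce s).Reachable ⟨(0, y), h0⟩ ⟨(c, y), hl c hc⟩ by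
    exact ⟨hl a ha, hl b hb, (H a ha).symm.trans (H b hb)⟩
  intro c
  induction c with
  | zero => intro _; exact SimpleGraph.Reachable.refl _
  | succ c ih =>
    intro hc
    have hc' : c < 3^k := by omega
    refine (ih hc').trans (SimpleGraph.Adj.reachable ?_)
    show SierpGraph.Adj (c, y) (c+1, y)
    refine ⟨sierp_of_right hy, sierp_of_right hy, ?_⟩
    simp only
    push_cast
    rw [show ((c:ℤ)) - (c+1) = -1 by ring, sub_self]
    norm_num

lemma reach_vert {s : Set (ℕ × ℕ)} {k x : ℕ} (hx : ∀ i, digit 3 i x ≠ 1)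
    (hl : ∀ y, y < 3^k → ((x, y) : ℕ × ℕ) ∈ s) {a b : ℕ}
    (ha : a < 3^k) (hb : b < 3^k) : SierpGraph.ReachIn s (x, a) (x, b) := by
  have h0 : (x, (0:ℕ)) ∈ s := hl 0 (pow_pos (by norm_num : (0:ℕ) < 3) k)
  suffices H : ∀ c (hc : c < 3^k),
      (SierpGraph.induce s).Reachable ⟨(x, 0), h0⟩ ⟨(x, c), hl c hc⟩ by
    exact ⟨hl a ha, hl b hb, (H a ha).symm.trans (H b hb)⟩
  intro c
  induction c with
  | zero => intro _; exact SimpleGraph.Reachable.refl _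
  | succ c ih =>
    intro hc
    have hc' : c < 3^k := by omega
    refine (ih hc').trans (SimpleGraph.Adj.reachable ?_)
    show SierpGraph.Adj (x, c) (x, c+1)
    refine ⟨sierp_of_left hx, sierp_of_left hx, ?_⟩
    simp only
    push_cast
    rw [show ((c:ℤ)) - (c+1) = -1 by ring, sub_self]
    norm_num

lemma main_bound (k : ℕ) (T : Finset (ℕ × ℕ)) (hT : IsHalfCutSet SierpGraph (CkV k) T) :
    2^k ≤ 160 * T.card := by
  by_contra hlt
  push_neg at hlt
  set N := 3^k with hN
  set n := 2^k with hn
  have hnN : n ≤ N := Nat.pow_le_pow_left (by norm_num) k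
  set D := Dset k with hD
  set S : Set (ℕ × ℕ) := ↑(CkV k \ T) with hS
  set UH := D.filter (fun y => ∀ p ∈ T, p.2 ≠ y) with hUH
  set UV := D.filter (fun x => ∀ p ∈ T, p.1 ≠ x) with hUV
  have hDcard : D.card = n := card_Dset k
  have hDsub : ∀ z ∈ D, z < N := fun z hz => (mem_Dset.1 hz).1
  -- counting untouched lines
  have hUHcard : n ≤ UH.card + T.card := by
    have hsub : D \ UH ⊆ T.image Prod.snd := by
      intro y hy
      simp only [hUH, Finset.mem_sdiff, Finset.mem_filter, not_and, not_forall] at hy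
      obtain ⟨hyD, hy2⟩ := hy
      obtain ⟨p, hp, hpy⟩ := hy2 hyD
      exact Finset.mem_image.2 ⟨p, hp, by omega⟩
    have h1 : (D \ UH).card ≤ T.card :=
      le_trans (Finset.card_le_card hsub) Finset.card_image_le
    have h2 : D.card ≤ UH.card + (D \ UH).card := by
      rw [← Finset.card_union_of_disjoint (Finset.disjoint_sdiff)]
      exact Finset.card_le_card (by intro z hz; by_cases h : z ∈ UH <;>
        simp [Finset.mem_union, Finset.mem_sdiff, h, hz])
    omega
  have hUVcard : n ≤ UV.card + T.card := by
    have hsub : D \ UV ⊆ T.image Prod.fst := by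
      intro y hy
      simp only [hUV, Finset.mem_sdiff, Finset.mem_filter, not_and, not_forall] at hy
      obtain ⟨hyD, hy2⟩ := hy
      obtain ⟨p, hp, hpy⟩ := hy2 hyD
      exact Finset.mem_image.2 ⟨p, hp, by omega⟩
    have h1 : (D \ UV).card ≤ T.card :=
      le_trans (Finset.card_le_card hsub) Finset.card_image_le
    have h2 : D.card ≤ UV.card + (D \ UV).card := by
      rw [← Finset.card_union_of_disjoint (Finset.disjoint_sdiff)]
      exact Finset.card_le_card (by intro z hz; by_cases h : z ∈ UV <;>
        simp [Finset.mem_union, Finset.mem_sdiff, h, hz])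
    omega
  have hUHsubD : UH ⊆ D := Finset.filter_subset _ _
  have hUVsubD : UV ⊆ D := Finset.filter_subset _ _
  have htn : T.card < n := by omega
  -- untouched lines lie in S
  have hHS : ∀ y ∈ UH, ∀ x, x < N → ((x, y) : ℕ × ℕ) ∈ S := by
    intro y hy x hx
    simp only [hUH, Finset.mem_filter] at hy
    simp only [hS, Finset.coe_sdiff, Set.mem_diff, Finset.mem_coe]
    constructor
    · rw [ckV_eq]
      exact Finset.mem_union_left _ (Finset.mem_product.2 ⟨Finset.mem_range.2 hx, hy.1⟩)
    · intro hmem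
      exact hy.2 _ hmem rfl
  have hVS : ∀ x ∈ UV, ∀ y, y < N → ((x, y) : ℕ × ℕ) ∈ S := by
    intro x hx y hy
    simp only [hUV, Finset.mem_filter] at hx
    simp only [hS, Finset.coe_sdiff, Set.mem_diff, Finset.mem_coe]
    constructor
    · rw [ckV_eq]
      exact Finset.mem_union_right _ (Finset.mem_product.2 ⟨hx.1, Finset.mem_range.2 hy⟩)
    · intro hmem
      exact hx.2 _ hmem rfl
  -- base point
  have hUHne : UH.Nonempty := Finset.card_pos.1 (by omega)
  have hUVne : UV.Nonempty := Finset.card_pos.1 (by omega)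
  obtain ⟨y0, hy0⟩ := hUHne
  obtain ⟨x0, hx0⟩ := hUVne
  have hy0N : y0 < N := hDsub _ (hUHsubD hy0)
  have hx0N : x0 < N := hDsub _ (hUVsubD hx0)
  have hy0d : ∀ i, digit 3 i y0 ≠ 1 := (mem_Dset.1 (hUHsubD hy0)).2
  have hx0d : ∀ i, digit 3 i x0 ≠ 1 := (mem_Dset.1 (hUVsubD hx0)).2
  set U : Finset (ℕ × ℕ) := (Finset.range N ×ˢ UH) ∪ (UV ×ˢ Finset.range N) with hU
  -- all of U is in the component of (x0, y0)
  have hkey : (↑U : Set (ℕ × ℕ)) ⊆ SierpGraph.compIn S (x0, y0) := by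
    rintro ⟨x, y⟩ hxy
    simp only [hU, Finset.coe_union, Set.mem_union, Finset.mem_coe, Finset.mem_product,
      Finset.mem_range] at hxy
    rcases hxy with ⟨hx, hy⟩ | ⟨hx, hy⟩
    · -- y ∈ UH
      have hyN : y < N := hDsub _ (hUHsubD hy)
      have hyd : ∀ i, digit 3 i y ≠ 1 := (mem_Dset.1 (hUHsubD hy)).2
      refine reachIn_trans (s := S) (b := (x0, y)) ?_ ?_
      · exact reach_vert hx0d (hVS x0 hx0) hy0N hyN
      · exact reach_horiz hyd (hHS y hy) hx0N hx
    · -- x ∈ UV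
      have hxN : x < N := hDsub _ (hUVsubD hx)
      have hxd : ∀ i, digit 3 i x ≠ 1 := (mem_Dset.1 (hUVsubD hx)).2
      refine reachIn_trans (s := S) (b := (x, y0)) ?_ ?_
      · exact reach_horiz hy0d (hHS y0 hy0) hx0N hxN
      · exact reach_vert hxd (hVS x hx) hy0N hy
  -- component size
  have hcompsub : SierpGraph.compIn S (x0, y0) ⊆ S := by
    rintro w ⟨-, hw, -⟩
    exact hw
  have hfin : (SierpGraph.compIn S (x0, y0)).Finite :=
    Set.Finite.subset (Finset.finite_toSet _) hcompsub
  have hsz : U.card ≤ (SierpGraph.compIn S (x0, y0)).ncard := by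
    rw [← Set.ncard_coe_finset]
    exact Set.ncard_le_ncard hkey hfin
  have hcut : 2 * (SierpGraph.compIn S (x0, y0)).ncard ≤ (CkV k).card := by
    have h1 := hT.2 (x0, y0)
    rw [hS]
    convert h1 using 7
  -- card identities
  have hInterU : (Finset.range N ×ˢ UH) ∩ (UV ×ˢ Finset.range N) = UV ×ˢ UH := by
    ext ⟨x, y⟩
    simp only [Finset.mem_inter, Finset.mem_product, Finset.mem_range]
    constructor
    · rintro ⟨⟨-, h2⟩, h3, -⟩; exact ⟨h3, h2⟩
    · rintro ⟨h1, h2⟩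
      exact ⟨⟨hDsub _ (hUVsubD h1), h2⟩, h1, hDsub _ (hUHsubD h2)⟩
  have hUcard : U.card + UV.card * UH.card = N * UH.card + UV.card * N := by
    have := Finset.card_union_add_card_inter (Finset.range N ×ˢ UH) (UV ×ˢ Finset.range N)
    rw [hInterU] at this
    simpa [Finset.card_product, Finset.card_range, mul_comm] using this
  have hInterC : (Finset.range N ×ˢ D) ∩ (D ×ˢ Finset.range N) = D ×ˢ D := by
    ext ⟨x, y⟩
    simp only [Finset.mem_inter, Finset.mem_product, Finset.mem_range]
    constructor
    · rintro ⟨⟨-, h2⟩, h3, -⟩; exact ⟨h3, h2⟩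
    · rintro ⟨h1, h2⟩
      exact ⟨⟨hDsub _ h1, h2⟩, h1, hDsub _ h2⟩
  have hCcard : (CkV k).card + n * n = N * n + n * N := by
    have := Finset.card_union_add_card_inter (Finset.range N ×ˢ D) (D ×ˢ Finset.range N)
    rw [hInterC] at this
    rw [ckV_eq k]
    simpa [Finset.card_product, Finset.card_range, hDcard, mul_comm] using this
  -- final arithmetic
  have h2U : 2 * U.card ≤ (CkV k).card := le_trans (by omega) hcut
  have hhn : UH.card ≤ n := by rw [← hDcard]; exact Finset.card_le_card hUHsubD
  have hvn : UV.card ≤ n := by rw [← hDcard]; exact Finset.card_le_card hUVsubD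
  -- pass to integers
  have hfalse : False := by
    set h := UH.card
    set v := UV.card
    set t := T.card
    zify at h2U hUcard hCcard hUHcard hUVcard hhn hvn hnN hlt htn
    have a1 : (0:ℤ) ≤ ((h:ℤ) - ((n:ℤ) - t)) * ((N:ℤ) - v) := by
      apply mul_nonneg <;> omega
    have a2 : (0:ℤ) ≤ ((v:ℤ) - ((n:ℤ) - t)) * ((N:ℤ) - ((n:ℤ) - t)) := by
      apply mul_nonneg <;> omega
    have a3 : (0:ℤ) ≤ ((n:ℤ) - 4*t) * ((N:ℤ) - n) := by
      apply mul_nonneg <;> omega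
    have a4 : ((160:ℤ)*t + 1) * ((160:ℤ)*t + 1) ≤ (n:ℤ) * N := by
      have h1 : ((160:ℤ)*t + 1) ≤ n := by omega
      have h2 : ((160:ℤ)*t + 1) ≤ N := by omega
      exact mul_le_mul h1 h2 (by positivity) (by omega)
    nlinarith [h2U, hUcard, hCcard, a1, a2, a3, a4]
  exact hfalse

lemma cut_set_nonempty (k : ℕ) :
    {t | ∃ T : Finset (ℕ × ℕ), IsHalfCutSet SierpGraph (CkV k) T ∧ T.card = t}.Nonempty := by
  refine ⟨(CkV k).card, CkV k, ⟨subset_refl _, fun v => ?_⟩, rfl⟩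
  have h0 : SierpGraph.compIn (↑(CkV k \ CkV k)) v = ∅ :=
    Set.eq_empty_iff_forall_notMem.2 fun w hw => by
      obtain ⟨hv, -, -⟩ := hw
      simp at hv
  have h1 : 2 * (SierpGraph.compIn (↑(CkV k \ CkV k)) v).ncard ≤ (CkV k).card := by
    rw [h0]; simp
  convert h1 using 7

/-- The complete-lines subgraph `C_k` of `Γ_k` satisfies `cut¹ᐟ²(C_k) ≥ 2^k/160`. -/
theorem sierpinski_complete_lines_cut' (k : ℕ) :
    (2 : ℝ) ^ k / 160 ≤ (cutHalf SierpGraph (CkV k) : ℝ) := by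
  have hmem := Nat.sInf_mem (cut_set_nonempty k)
  obtain ⟨T, hT, hTc⟩ := hmem
  have heq : cutHalf SierpGraph (CkV k) = T.card := by
    rw [cutHalf, ← hTc]
  have hb : 2^k ≤ 160 * cutHalf SierpGraph (CkV k) := by
    rw [heq]
    exact main_bound k T hT
  rw [div_le_iff₀ (by norm_num : (0:ℝ) < 160)]
  have := (Nat.cast_le (α := ℝ)).2 hb
  push_cast at this
  linarith
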